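/- Let m ≥ 2, let μ₀ ∈ ℝ^m lie in the probability simplex Δ_m with every entry strictly positive, and let c ∈ ℝ^m satisfy c_1 > c_2 ≥ c_3 ≥ … ≥ c_m; set D_2 = c_1 - c_2 > 0. Let t ≥ 0 be a real number, let ε > 0, and let φ ∈ ℝ^m satisfy |φ(j) - c_j| ≤ ε for every j. Define the Gibbs distribution μ(j) = μ₀_j · exp(t·φ(j)) / (Σ_{j'=1}^m μ₀_{j'} · exp(t·φ(j'))). Then |μ(1) - 1| ≤ (m-1) · (max_{1≤k≤m} μ₀_k / μ₀_1) · exp((-D_2 + 2ε)·t). -/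

import Mathlib

/-- Suppose `c_1 > c_2 ≥ … ≥ c_m`, `D_2 = c_1 - c_2 > 0`, and
`|φ(j) - c_j| ≤ ε` for every `j`. Then the Gibbs distribution
`μ(j) = μ₀_j exp(t φ(j)) / ∑_{j'} μ₀_{j'} exp(t φ(j'))` satisfies
`|μ(1) - 1| ≤ (m-1) (max_k μ₀_k / μ₀_1) exp((-D_2 + 2ε) t)`
(state `j` is represented by the index `⟨j-1, _⟩ : Fin m`). -/
theorem gibbs_learning_rate_bound
    (m : ℕ) (hm : 2 ≤ m) (μ0 : Fin m → ℝ)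
    (hμ0 : μ0 ∈ stdSimplex ℝ (Fin m)) (hμ0pos : ∀ j, 0 < μ0 j)
    (c : Fin m → ℝ)
    (hc12 : c ⟨1, by omega⟩ < c ⟨0, by omega⟩)
    (hcmono : ∀ j j' : Fin m, j ≠ ⟨0, by omega⟩ → j ≤ j' → c j' ≤ c j)
    (D2 : ℝ) (hD2 : D2 = c ⟨0, by omega⟩ - c ⟨1, by omega⟩)
    (t : ℝ) (ht : 0 ≤ t) (ε : ℝ) (hε : 0 < ε)
    (φ : Fin m → ℝ) (hφ : ∀ j, |φ j - c j| ≤ ε)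
    (μ : Fin m → ℝ)
    (hμ : ∀ j, μ j = μ0 j * Real.exp (t * φ j) /
      ∑ j', μ0 j' * Real.exp (t * φ j')) :
    |μ ⟨0, by omega⟩ - 1| ≤
      ((m : ℝ) - 1) *
        ((Finset.univ.sup' (Finset.univ_nonempty_iff.mpr ⟨⟨0, by omega⟩⟩) μ0) /
          μ0 ⟨0, by omega⟩) *
        Real.exp ((-D2 + 2 * ε) * t) := by
  have hm0 : 0 < m := by omega
  set i0 : Fin m := ⟨0, by omega⟩ with hi0
  set i1 : Fin m := ⟨1, by omega⟩ with hi1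
  set M : ℝ := Finset.univ.sup' (Finset.univ_nonempty_iff.mpr ⟨i0⟩) μ0 with hM
  set Z : ℝ := ∑ j', μ0 j' * Real.exp (t * φ j') with hZ
  have hterm_pos : ∀ j : Fin m, 0 < μ0 j * Real.exp (t * φ j) :=
    fun j => mul_pos (hμ0pos j) (Real.exp_pos _)
  have hZpos : 0 < Z :=
    Finset.sum_pos (fun j _ => hterm_pos j) ⟨i0, Finset.mem_univ _⟩
  have h0le : μ0 i0 * Real.exp (t * φ i0) ≤ Z :=
    Finset.single_le_sum (fun j _ => (hterm_pos j).le) (Finset.mem_univ i0)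
  have hμle1 : μ i0 ≤ 1 := by
    rw [hμ i0]; exact div_le_one_of_le₀ h0le hZpos.le
  have habs : |μ i0 - 1| = 1 - μ i0 := by
    rw [abs_sub_comm, abs_of_nonneg (by linarith)]
  rw [habs]
  have hsplit : 1 - μ i0 =
      (∑ j ∈ Finset.univ.erase i0, μ0 j * Real.exp (t * φ j)) / Z := by
    rw [hμ i0, eq_div_iff hZpos.ne', sub_mul, one_mul,
      div_mul_cancel₀ _ hZpos.ne']
    have := Finset.add_sum_erase Finset.univ
      (fun j => μ0 j * Real.exp (t * φ j)) (Finset.mem_univ i0)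
    rw [hZ]; linarith
  rw [hsplit]
  -- bound each term of the sum
  have hbound : ∀ j ∈ Finset.univ.erase i0,
      μ0 j * Real.exp (t * φ j) ≤
        M * (Real.exp ((-D2 + 2 * ε) * t) * Real.exp (t * φ i0)) := by
    intro j hj
    have hjne : j ≠ i0 := Finset.ne_of_mem_erase hj
    have hj1 : i1 ≤ j := by
      have : j.val ≠ 0 := fun h => hjne (Fin.ext h)
      exact Fin.mk_le_of_le_val (by omega)
    have hcj : c j ≤ c i1 := hcmono i1 j (by simp [hi1, hi0, Fin.ext_iff]) hj1
    have h1 := abs_le.mp (hφ j)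
    have h2 := abs_le.mp (hφ i0)
    have hexp : t * φ j ≤ (-D2 + 2 * ε) * t + t * φ i0 := by
      have hφdiff : φ j - φ i0 ≤ -D2 + 2 * ε := by
        rw [hD2]; linarith [h1.2, h2.1]
      nlinarith
    have hμ0M : μ0 j ≤ M := Finset.le_sup' μ0 (Finset.mem_univ j)
    calc μ0 j * Real.exp (t * φ j)
        ≤ M * Real.exp ((-D2 + 2 * ε) * t + t * φ i0) :=
          mul_le_mul hμ0M (Real.exp_le_exp.mpr hexp) (Real.exp_pos _).le
            (le_trans (hμ0pos j).le hμ0M)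
      _ = M * (Real.exp ((-D2 + 2 * ε) * t) * Real.exp (t * φ i0)) := by
          rw [Real.exp_add]
  have hcard : (Finset.univ.erase i0).card = m - 1 := by
    rw [Finset.card_erase_of_mem (Finset.mem_univ i0), Finset.card_univ,
      Fintype.card_fin]
  have hsum_le : (∑ j ∈ Finset.univ.erase i0, μ0 j * Real.exp (t * φ j)) ≤
      ((m : ℝ) - 1) * (M * (Real.exp ((-D2 + 2 * ε) * t) * Real.exp (t * φ i0))) := by
    have := Finset.sum_le_card_nsmul _ _ _ hbound
    rw [hcard, nsmul_eq_mul] at this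
    have hcast : ((m - 1 : ℕ) : ℝ) = (m : ℝ) - 1 := by
      push_cast [Nat.cast_sub (by omega : 1 ≤ m)]; ring
    rwa [hcast] at this
  have hsum_nonneg : 0 ≤ ∑ j ∈ Finset.univ.erase i0, μ0 j * Real.exp (t * φ j) :=
    Finset.sum_nonneg fun j _ => (hterm_pos j).le
  calc (∑ j ∈ Finset.univ.erase i0, μ0 j * Real.exp (t * φ j)) / Z
      ≤ (∑ j ∈ Finset.univ.erase i0, μ0 j * Real.exp (t * φ j)) /
          (μ0 i0 * Real.exp (t * φ i0)) :=
        div_le_div_of_nonneg_left hsum_nonneg (hterm_pos i0) h0le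
    _ ≤ (((m : ℝ) - 1) * (M * (Real.exp ((-D2 + 2 * ε) * t) * Real.exp (t * φ i0)))) /
          (μ0 i0 * Real.exp (t * φ i0)) := by
        exact div_le_div_of_nonneg_right hsum_le (hterm_pos i0).le
    _ = ((m : ℝ) - 1) * (M / μ0 i0) * Real.exp ((-D2 + 2 * ε) * t) := by
        rw [div_eq_iff (hterm_pos i0).ne']
        field_simp [(hμ0pos i0).ne']
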